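/- Let G be a graph with a tree decomposition (T, 𝓑) in which every bag induces a complete subgraph of G, and suppose a 2-coloring c : V(G) → {r, b} is given. Call the decomposition easy for a family 𝓗 of connected subgraphs if for every H ∈ 𝓗 and every adhesion set A = B_x ∩ B_y (for an edge {x,y} of T), H ∩ A ≠ ∅ implies H contains a blue vertex of A. If (T, 𝓑) is easy for 𝓗 and has width t, then the graph Q on the blue vertices b(V), with edges all pairs of blue vertices lying in a common bag, is a support for the primal hypergraph: for each H ∈ 𝓗 with at least one blue vertex, the blue vertices of H induce a connected subgraph of Q, and tw(Q) ≤ t. -/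

import Mathlib

open scoped ENNReal

/-- A tree decomposition of a graph `G`: a tree `T` with bags `bag i ⊆ V` such that
every vertex appears in a bag, every edge lies in a bag, and the bags containing a
fixed vertex form a connected subtree. -/
def IsTreeDecomp {V ι : Type} (G : SimpleGraph V) (T : SimpleGraph ι) (bag : ι → Set V) : Prop :=
  T.IsTree ∧ (∀ v, ∃ i, v ∈ bag i) ∧
    (∀ u v, G.Adj u v → ∃ i, u ∈ bag i ∧ v ∈ bag i) ∧
    (∀ v, (T.induce {i | v ∈ bag i}).Connected)

/-- Width of a tree decomposition: (max bag size) − 1. -/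
noncomputable def decompWidth {V ι : Type} (bag : ι → Set V) : ℕ∞ :=
  (⨆ i, (bag i).encard) - 1

/-- Treewidth: the infimum of widths of tree decompositions. -/
noncomputable def treewidth {V : Type} (G : SimpleGraph V) : ℕ∞ :=
  sInf {w : ℕ∞ | ∃ (ι : Type) (T : SimpleGraph ι) (bag : ι → Set V),
    IsTreeDecomp G T bag ∧ w = decompWidth bag}

/-- A family of vertex sets is non-piercing in `G` if every pairwise difference
(when nonempty) induces a connected subgraph of `G`. -/
def NonPiercing {V : Type} (G : SimpleGraph V) (F : Set (Set V)) : Prop :=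
  ∀ H ∈ F, ∀ H' ∈ F, (H \ H').Nonempty → (G.induce (H \ H')).Connected

/-- Outerplanarity via a one-page (circular, non-crossing) layout. -/
def Outerplanar {α : Type} (Q : SimpleGraph α) : Prop :=
  ∃ f : α → ℕ, Function.Injective f ∧
    ∀ a b c d : α, Q.Adj a b → Q.Adj c d →
      ¬ (f a < f c ∧ f c < f b ∧ f b < f d)

/-- `a, b, c` appear in this (clockwise) cyclic order on the cycle `Fin n`. -/
def Cyc3 {n : ℕ} (a b c : Fin n) : Prop :=
  (a < b ∧ b < c) ∨ (b < c ∧ c < a) ∨ (c < a ∧ a < b)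

/-- `a, b, c, d` appear in this (clockwise) cyclic order on the cycle `Fin n`. -/
def Cyc4 {n : ℕ} (a b c d : Fin n) : Prop :=
  (a < b ∧ b < c ∧ c < d) ∨ (b < c ∧ c < d ∧ d < a) ∨
    (c < d ∧ d < a ∧ a < b) ∨ (d < a ∧ a < b ∧ b < c)

/-- Open arc of vertices strictly between `u` and `v` clockwise. -/
def arcO {n : ℕ} (u v : Fin n) : Set (Fin n) := {w | Cyc3 u w v}

/-- Closed arc of vertices from `u` to `v` clockwise (inclusive). -/
def arcC {n : ℕ} (u v : Fin n) : Set (Fin n) := {u} ∪ {v} ∪ {w | Cyc3 u w v}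

/-- The cycle system is `axax`-free. -/
def AxaxFree {n : ℕ} (F : Set (Set (Fin n))) : Prop :=
  ¬ ∃ H ∈ F, ∃ H' ∈ F, ∃ a₁ x₁ a₂ x₂ : Fin n,
    Cyc4 a₁ x₁ a₂ x₂ ∧ a₁ ∈ H \ H' ∧ a₂ ∈ H \ H' ∧ x₁ ∈ H' ∧ x₂ ∈ H'

/-- The cycle system is `abab`-free. -/
def AbabFree {n : ℕ} (F : Set (Set (Fin n))) : Prop :=
  ¬ ∃ H ∈ F, ∃ H' ∈ F, ∃ a₁ b₁ a₂ b₂ : Fin n,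
    Cyc4 a₁ b₁ a₂ b₂ ∧ a₁ ∈ H \ H' ∧ a₂ ∈ H \ H' ∧ b₁ ∈ H' \ H ∧ b₂ ∈ H' \ H

/-- The vertices appearing in bags of the component of `T` minus the edge `{x,y}`
that contains `x` (the `x`-side of the tree decomposition). -/
def sideVerts {V ι : Type} (T : SimpleGraph ι) (bag : ι → Set V) (x y : ι) : Set V :=
  ⋃ i ∈ {i | (T.deleteEdges {s(x, y)}).Reachable x i}, bag i

/-- Adjacency in the `N × N` grid graph. -/
def gridAdj {N : ℕ} (p q : Fin N × Fin N) : Prop :=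
  (p.1 = q.1 ∧ (p.2.val + 1 = q.2.val ∨ q.2.val + 1 = p.2.val)) ∨
    (p.2 = q.2 ∧ (p.1.val + 1 = q.1.val ∨ q.1.val + 1 = p.1.val))

/-- Clockwise distance from `b` to `a` on the cycle `Fin n`. -/
def relpos {n : ℕ} (a b : Fin n) : ℕ := (a.val + n - b.val) % n

/-- Lexicographic comparison on pairs of naturals. -/
def lexLe (p q : ℕ × ℕ) : Prop := p.1 < q.1 ∨ (p.1 = q.1 ∧ p.2 ≤ q.2)

/-- A set of indices forming a (possibly empty) cyclic interval of `Fin m`. -/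
def CycInterval {m : ℕ} (S : Set (Fin m)) : Prop := S = ∅ ∨ ∃ i j : Fin m, S = arcC i j

/-- Maximal elements of a family of sets under inclusion. -/
def maxElems {X : Type} (F : Set (Set X)) : Set (Set X) :=
  {H ∈ F | ∀ H' ∈ F, H ⊆ H' → H = H'}


section Stmt3Aux

variable {V ι : Type} {T : SimpleGraph ι} {bag : ι → Set V}

private lemma stmt3_bridge (hT : T.IsTree) {x y : ι} (h : T.Adj x y) :
    ¬ (T.deleteEdges {s(x, y)}).Reachable x y := by
  have hb := (SimpleGraph.isAcyclic_iff_forall_edge_isBridge.mp hT.2)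
    ((SimpleGraph.mem_edgeSet T).mpr h)
  exact SimpleGraph.isBridge_iff.mp hb

private lemma stmt3_walkside {x y : ι} :
    ∀ {a b : ι} (_ : T.Walk a b),
      ((T.deleteEdges {s(x, y)}).Reachable x a ∨ (T.deleteEdges {s(x, y)}).Reachable y a) →
      ((T.deleteEdges {s(x, y)}).Reachable x b ∨ (T.deleteEdges {s(x, y)}).Reachable y b) := by
  intro a b p
  induction p with
  | nil => exact id
  | cons h q ih =>
    rename_i u v w
    intro ha
    apply ih
    by_cases he : s(u, v) = s(x, y)
    · rcases Sym2.eq_iff.mp he with ⟨rfl, rfl⟩ | ⟨rfl, rfl⟩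
      · exact Or.inr (SimpleGraph.Reachable.refl _)
      · exact Or.inl (SimpleGraph.Reachable.refl _)
    · have hadj : (T.deleteEdges {s(x, y)}).Adj u v := by
        rw [SimpleGraph.deleteEdges_adj]
        exact ⟨h, by simpa using he⟩
      exact ha.imp (fun r => r.trans hadj.reachable) (fun r => r.trans hadj.reachable)

private lemma stmt3_cover (hT : T.IsTree) {x y : ι} (j : ι) :
    (T.deleteEdges {s(x, y)}).Reachable x j ∨ (T.deleteEdges {s(x, y)}).Reachable y j := by
  obtain ⟨p⟩ := hT.1.preconnected x j
  exact stmt3_walkside p (Or.inl (SimpleGraph.Reachable.refl _))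

private lemma stmt3_cross (hT : T.IsTree) {x y : ι} (hxy : T.Adj x y) {S : Set ι}
    (hS : (T.induce S).Connected) {a b : ι}
    (hra : (T.deleteEdges {s(x, y)}).Reachable x a) (haS : a ∈ S)
    (hrb : (T.deleteEdges {s(x, y)}).Reachable y b) (hbS : b ∈ S) :
    x ∈ S ∧ y ∈ S := by
  have hnr := stmt3_bridge hT hxy
  obtain ⟨p⟩ := hS.preconnected ⟨a, haS⟩ ⟨b, hbS⟩
  have key : ∀ (n m : ↑S) (_ : (T.induce S).Walk n m),
      (T.deleteEdges {s(x, y)}).Reachable x n.val →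
      (T.deleteEdges {s(x, y)}).Reachable x m.val ∨ (x ∈ S ∧ y ∈ S) := by
    intro n m p
    induction p with
    | nil => exact fun h => Or.inl h
    | cons h q ih =>
      rename_i u v w
      intro hu
      by_cases he : s(u.val, v.val) = s(x, y)
      · rcases Sym2.eq_iff.mp he with ⟨h1, h2⟩ | ⟨h1, h2⟩
        · exact Or.inr ⟨h1 ▸ u.2, h2 ▸ v.2⟩
        · exact absurd (h1 ▸ hu) hnr
      · have hadj : (T.deleteEdges {s(x, y)}).Adj u.val v.val := by
          rw [SimpleGraph.deleteEdges_adj]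
          exact ⟨h, by simpa using he⟩
        exact ih (hu.trans hadj.reachable)
  rcases key _ _ p hra with h | h
  · exact absurd (h.trans hrb.symm) hnr
  · exact h

private lemma stmt3_sep {G : SimpleGraph V} (hTD : IsTreeDecomp G T bag)
    {x y : ι} (hxy : T.Adj x y) {H : Set V} :
    ∀ (a b : ↑H) (_ : (G.induce H).Walk a b),
      (∃ m, (T.deleteEdges {s(x, y)}).Reachable x m ∧ a.val ∈ bag m) →
      (∃ m, (T.deleteEdges {s(x, y)}).Reachable y m ∧ b.val ∈ bag m) →
      ∃ z ∈ H, z ∈ bag x ∧ z ∈ bag y := by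
  obtain ⟨hT, hvert, hedge, hsub⟩ := hTD
  intro a b q
  induction q with
  | nil =>
    rename_i u
    rintro ⟨m, hm, hum⟩ ⟨m', hm', hum'⟩
    have h := stmt3_cross hT hxy (hsub u.val) hm hum hm' hum'
    exact ⟨u.val, u.2, h.1, h.2⟩
  | cons h q ih =>
    rename_i u v w
    intro ha hb
    obtain ⟨m, hum, hvm⟩ := hedge u.val v.val h
    rcases stmt3_cover hT (x := x) (y := y) m with hmx | hmy
    · exact ih ⟨m, hmx, hvm⟩ hb
    · obtain ⟨m0, hm0, hum0⟩ := ha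
      have hc := stmt3_cross hT hxy (hsub u.val) hm0 hum0 hmy hum
      exact ⟨u.val, u.2, hc.1, hc.2⟩

end Stmt3Aux

theorem stmt3 {V ι : Type} (G : SimpleGraph V) (T : SimpleGraph ι) (bag : ι → Set V)
    (hTD : IsTreeDecomp G T bag)
    (hclique : ∀ i, (bag i).Pairwise G.Adj)
    (c : V → Bool) (𝓗 : Set (Set V))
    (hconn : ∀ H ∈ 𝓗, (G.induce H).Connected)
    (heasy : ∀ H ∈ 𝓗, ∀ x y : ι, T.Adj x y → (H ∩ (bag x ∩ bag y)).Nonempty →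
      ∃ v ∈ H ∩ (bag x ∩ bag y), c v = true)
    (t : ℕ∞) (hw : decompWidth bag ≤ t)
    (Q : SimpleGraph {v : V // c v = true})
    (hQ : ∀ u w : {v : V // c v = true}, Q.Adj u w ↔
      u ≠ w ∧ ∃ i, (u : V) ∈ bag i ∧ (w : V) ∈ bag i) :
    (∀ H ∈ 𝓗, (H ∩ {v | c v = true}).Nonempty →
      (Q.induce {v : {v : V // c v = true} | (v : V) ∈ H}).Connected) ∧
    treewidth Q ≤ t := by
  classical
  obtain ⟨hT, hvert, hedge, hsub⟩ := hTD
  have hTD' : IsTreeDecomp G T bag := ⟨hT, hvert, hedge, hsub⟩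
  constructor
  · intro H hH hne
    rw [SimpleGraph.connected_iff]
    constructor
    · have key : ∀ {i j : ι} (p : T.Walk i j), p.IsPath →
          ∀ (u w : V) (hu : c u = true) (hw : c w = true) (huH : u ∈ H) (hwH : w ∈ H),
          u ∈ bag i → w ∈ bag j →
          (Q.induce {v : {v : V // c v = true} | (v : V) ∈ H}).Reachable
            ⟨⟨u, hu⟩, huH⟩ ⟨⟨w, hw⟩, hwH⟩ := by
        intro i j p
        induction p with
        | nil =>
          rename_i i
          intro _ u w hu hw huH hwH hbi hbj
          by_cases huw : u = w
          · subst huw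
            exact SimpleGraph.Reachable.refl _
          · have hadj : Q.Adj ⟨u, hu⟩ ⟨w, hw⟩ :=
              (hQ _ _).mpr ⟨fun hc => huw (congrArg Subtype.val hc), i, hbi, hbj⟩
            exact SimpleGraph.Adj.reachable
              (show (Q.induce _).Adj ⟨⟨u, hu⟩, huH⟩ ⟨⟨w, hw⟩, hwH⟩ from hadj)
        | cons h q ih =>
          rename_i i k j
          intro hp u w hu hw huH hwH hbi hbj
          have hp' := (SimpleGraph.Walk.cons_isPath_iff h q).mp hp
          have hkj : (T.deleteEdges {s(i, k)}).Reachable k j := by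
            refine ⟨q.toDeleteEdges _ ?_⟩
            intro e he hmem
            rw [Set.mem_singleton_iff] at hmem
            subst hmem
            exact hp'.2 (q.fst_mem_support_of_mem_edges he)
          obtain ⟨qH⟩ := (hconn H hH).preconnected ⟨u, huH⟩ ⟨w, hwH⟩
          obtain ⟨z, hzH, hzi, hzk⟩ := stmt3_sep hTD' h _ _ qH
            ⟨i, SimpleGraph.Reachable.refl _, hbi⟩ ⟨j, hkj, hbj⟩
          obtain ⟨v', ⟨hv'H, hv'i, hv'k⟩, hv'c⟩ := heasy H hH i k h ⟨z, hzH, hzi, hzk⟩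
          have step2 := ih hp'.1 v' w hv'c hw hv'H hwH hv'k hbj
          by_cases huv : u = v'
          · subst huv
            exact step2
          · have hadj : Q.Adj ⟨u, hu⟩ ⟨v', hv'c⟩ :=
              (hQ _ _).mpr ⟨fun hc => huv (congrArg Subtype.val hc), i, hbi, hv'i⟩
            exact (SimpleGraph.Adj.reachable
              (show (Q.induce _).Adj ⟨⟨u, hu⟩, huH⟩ ⟨⟨v', hv'c⟩, hv'H⟩ from hadj)).trans step2
      rintro ⟨⟨u, hu⟩, huH⟩ ⟨⟨w, hw⟩, hwH⟩
      obtain ⟨i, hbi⟩ := hvert u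
      obtain ⟨j, hbj⟩ := hvert w
      obtain ⟨p0⟩ := hT.1.preconnected i j
      exact key p0.toPath.1 p0.toPath.2 u w hu hw huH hwH hbi hbj
    · obtain ⟨v0, hv0H, hv0c⟩ := hne
      exact ⟨⟨⟨v0, hv0c⟩, hv0H⟩⟩
  · set bag2 : ι → Set {v : V // c v = true} := fun i => {v | v.val ∈ bag i} with hbag2
    have hd : IsTreeDecomp Q T bag2 := by
      refine ⟨hT, ?_, ?_, ?_⟩
      · intro v
        obtain ⟨i, hi⟩ := hvert v.val
        exact ⟨i, hi⟩
      · intro u w hadj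
        obtain ⟨hne', i, h1, h2⟩ := (hQ u w).mp hadj
        exact ⟨i, h1, h2⟩
      · intro v
        exact hsub v.val
    refine le_trans (sInf_le ⟨ι, T, bag2, hd, rfl⟩) (le_trans ?_ hw)
    apply tsub_le_tsub_right
    apply iSup_mono
    intro i
    calc (bag2 i).encard = ((Subtype.val '' bag2 i : Set V)).encard :=
          (Subtype.val_injective.encard_image _).symm
      _ ≤ (bag i).encard := Set.encard_mono (by rintro _ ⟨v, hv, rfl⟩; exact hv)
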